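/- Let d ≥ 1 be an integer and let δ be real with max(0, 1 − d/4) < δ ≤ 1. There exist κ > 0 and C > 0, depending only on d and δ, such that for all real t, u with 0 < t < u ≤ 2t and u < 1, one has ∑_{n ∈ ℤ^d, n₁ > 0} (u^δ e^{−2|n|² u} − t^δ e^{−2|n|² t})² · n₁² · |n|^{2−2d} ≤ C (u−t)^κ. -/

import Mathlib

set_option maxHeartbeats 1000000

open scoped BigOperators

/-- Euclidean norm of a lattice point `n ∈ ℤ^d`, viewed in `ℝ^d`. -/
noncomputable def znorm {d : ℕ} (n : Fin d → ℤ) : ℝ :=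
  Real.sqrt (∑ i, ((n i : ℝ)) ^ 2)

lemma aux_exp_le {a x : ℝ} (ha : 0 < a) (hx : 0 < x) :
    Real.exp (-x) ≤ (2*a)^a * x^(-a) := by
  have h2a : (0:ℝ) < 2*a := by linarith
  have hkey : x ^ a * Real.exp (-x) ≤ (2*a)^a := by
    have h1 : Real.log x * a ≤ Real.log (2*a) * a + x/2 := by
      have h2 : Real.log x - Real.log (2*a) ≤ x/(2*a) - 1 := by
        rw [← Real.log_div hx.ne' h2a.ne']
        exact Real.log_le_sub_one_of_pos (by positivity)
      have h3 : a * (Real.log x - Real.log (2*a)) ≤ a * (x/(2*a) - 1) :=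
        mul_le_mul_of_nonneg_left h2 ha.le
      rw [mul_sub, mul_sub] at h3
      have h4 : a * (x/(2*a)) = x/2 := by field_simp
      rw [h4] at h3
      nlinarith
    calc x ^ a * Real.exp (-x) = Real.exp (Real.log x * a + (-x)) := by
          rw [Real.exp_add, Real.rpow_def_of_pos hx]
      _ ≤ Real.exp (Real.log (2*a) * a + (-x/2)) := by
          apply Real.exp_le_exp.2; linarith
      _ = (2*a)^a * Real.exp (-x/2) := by
          rw [Real.exp_add, Real.rpow_def_of_pos h2a]
      _ ≤ (2*a)^a * 1 := by
          apply mul_le_mul_of_nonneg_left _ (by positivity)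
          rw [Real.exp_le_one_iff]; linarith
      _ = (2*a)^a := mul_one _
  have hxa : (0:ℝ) < x ^ a := Real.rpow_pos_of_pos hx a
  rw [Real.rpow_neg hx.le]
  calc Real.exp (-x) = (x ^ a * Real.exp (-x)) * (x^a)⁻¹ := by field_simp
    _ ≤ (2*a)^a * (x^a)⁻¹ := mul_le_mul_of_nonneg_right hkey (by positivity)

lemma aux_one_sub_exp {x θ : ℝ} (hx : 0 ≤ x) (hθ0 : 0 < θ) (hθ1 : θ ≤ 1) :
    1 - Real.exp (-x) ≤ x ^ θ := by
  rcases le_or_gt 1 x with h | h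
  · have h5 : (1:ℝ) ≤ x ^ θ := Real.one_le_rpow h hθ0.le
    have h6 : Real.exp (-x) > 0 := Real.exp_pos _
    linarith
  · rcases eq_or_lt_of_le hx with rfl | hx0
    · simp
      positivity
    · have h1 : 1 - Real.exp (-x) ≤ x := by
        have := Real.add_one_le_exp (-x); linarith
      calc 1 - Real.exp (-x) ≤ x := h1
        _ = x ^ (1:ℝ) := (Real.rpow_one x).symm
        _ ≤ x ^ θ := Real.rpow_le_rpow_of_exponent_ge hx0 h.le hθ1

lemma aux_summable_int {p : ℝ} (hp : 1 < p) :
    Summable (fun m : ℤ => ((1:ℝ) + |(m:ℝ)|) ^ (-p)) := by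
  have hnat : Summable (fun n : ℕ => ((n:ℝ)) ^ (-p)) :=
    Real.summable_nat_rpow.mpr (by linarith)
  have hnat1 : Summable (fun n : ℕ => ((1:ℝ) + (n:ℝ)) ^ (-p)) := by
    refine (hnat.comp_injective Nat.succ_injective).congr fun n => ?_
    simp only [Function.comp_apply, Nat.cast_succ]
    ring_nf
  apply Summable.of_nat_of_neg
  · refine hnat1.congr fun n => ?_
    simp
  · refine hnat1.congr fun n => ?_
    simp

lemma aux_summable_pi {p : ℝ} (hp : 1 < p) (d : ℕ) :
    Summable (fun n : Fin d → ℤ => ∏ i, ((1:ℝ) + |((n i : ℤ):ℝ)|) ^ (-p)) := by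
  induction d with
  | zero => exact Summable.of_finite
  | succ d ih =>
      have hmul := (aux_summable_int hp).mul_of_nonneg ih
        (fun m => by positivity) (fun v => by positivity)
      refine ((Fin.consEquiv (fun _ : Fin (d+1) => ℤ)).summable_iff).mp (hmul.congr fun x => ?_)
      simp [Fin.prod_univ_succ]

lemma key_increment {δ θ t u R : ℝ} (hθ0 : 0 < θ) (hθδ : θ ≤ δ) (hδ1 : δ ≤ 1)
    (ht : 0 < t) (htu : t < u) (hu2t : u ≤ 2*t) (hu1 : u < 1) (hR : 1 ≤ R) :
    |u^δ * Real.exp (-2*R*u) - t^δ * Real.exp (-2*R*t)| ≤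
      5 * ((u-t)^θ * t^(δ-θ) * R^θ * Real.exp (-2*R*t)) := by
  have hθ1 : θ ≤ 1 := hθδ.trans hδ1
  have hδ0 : 0 < δ := hθ0.trans_le hθδ
  have hu0 : 0 < u := ht.trans htu
  have ht1 : t < 1 := htu.trans hu1
  have hR0 : (0:ℝ) < R := lt_of_lt_of_le one_pos hR
  have hut : 0 < u - t := sub_pos.2 htu
  have hutt : u - t ≤ t := by linarith
  set Et := Real.exp (-2*R*t) with hEt
  set Eu := Real.exp (-2*R*u) with hEu
  have hEt0 : 0 < Et := Real.exp_pos _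
  have hEu0 : 0 < Eu := Real.exp_pos _
  have hEuEt : Eu = Et * Real.exp (-(2*R*(u-t))) := by
    rw [hEt, hEu, ← Real.exp_add]; ring_nf
  have hx0 : (0:ℝ) ≤ 2*R*(u-t) := by positivity
  -- bound on exp difference
  have hexp : Et - Eu ≤ Et * ((2*R*(u-t)) ^ θ) := by
    rw [hEuEt]
    have h1 : 1 - Real.exp (-(2*R*(u-t))) ≤ (2*R*(u-t)) ^ θ :=
      aux_one_sub_exp hx0 hθ0 hθ1
    calc Et - Et * Real.exp (-(2*R*(u-t))) = Et * (1 - Real.exp (-(2*R*(u-t)))) := by ring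
      _ ≤ Et * ((2*R*(u-t)) ^ θ) := mul_le_mul_of_nonneg_left h1 hEt0.le
  -- u^δ ≤ 2 t^δ
  have hud : u ^ δ ≤ 2 * t ^ δ := by
    calc u ^ δ ≤ (2*t) ^ δ := Real.rpow_le_rpow hu0.le hu2t hδ0.le
      _ = 2 ^ δ * t ^ δ := Real.mul_rpow (by norm_num) ht.le
      _ ≤ 2 ^ (1:ℝ) * t ^ δ := by
          apply mul_le_mul_of_nonneg_right _ (Real.rpow_nonneg ht.le δ)
          exact Real.rpow_le_rpow_of_exponent_le one_le_two hδ1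
      _ = 2 * t ^ δ := by rw [Real.rpow_one]
  -- t^δ ≤ t^(δ-θ)
  have htδθ : t ^ δ ≤ t ^ (δ - θ) :=
    Real.rpow_le_rpow_of_exponent_ge ht ht1.le (by linarith)
  -- x^θ expansion
  have hxθ : (2*R*(u-t)) ^ θ ≤ 2 * (R ^ θ * (u-t)^θ) := by
    rw [show (2*R*(u-t)) = 2*(R*(u-t)) by ring,
      Real.mul_rpow (by norm_num) (by positivity),
      Real.mul_rpow hR0.le hut.le]
    have h2 : (2:ℝ) ^ θ ≤ 2 := by
      calc (2:ℝ) ^ θ ≤ 2 ^ (1:ℝ) := Real.rpow_le_rpow_of_exponent_le one_le_two hθ1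
        _ = 2 := Real.rpow_one 2
    nlinarith [Real.rpow_nonneg hR0.le θ, Real.rpow_nonneg hut.le θ,
      mul_le_mul_of_nonneg_right h2 (mul_nonneg (Real.rpow_nonneg hR0.le θ) (Real.rpow_nonneg hut.le θ))]
  -- Part A
  have hA : u ^ δ * (Et - Eu) ≤ 4 * ((u-t)^θ * t^(δ-θ) * R^θ * Et) := by
    have hEtEu : 0 ≤ Et - Eu := by
      rw [hEuEt]
      nlinarith [Real.exp_le_one_iff.2 (by nlinarith : -(2*R*(u-t)) ≤ 0), hEt0.le]
    calc u ^ δ * (Et - Eu) ≤ (2 * t ^ δ) * (Et * ((2*R*(u-t)) ^ θ)) := by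
          apply mul_le_mul hud hexp hEtEu
          positivity
      _ ≤ (2 * t ^ (δ-θ)) * (Et * (2 * (R ^ θ * (u-t)^θ))) := by
          apply mul_le_mul (by linarith) (mul_le_mul_of_nonneg_left hxθ hEt0.le)
            (by positivity) (by positivity)
      _ = 4 * ((u-t)^θ * t^(δ-θ) * R^θ * Et) := by ring
  -- Part B
  have hB : (u ^ δ - t ^ δ) * Et ≤ (u-t)^θ * t^(δ-θ) * Et := by
    have h1 : u ^ δ ≤ t ^ δ * (u/t) := by
      have h2 : u ^ δ = t ^ δ * (u/t) ^ δ := by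
        rw [← Real.mul_rpow ht.le (by positivity)]
        rw [mul_div_cancel₀ _ ht.ne']
      rw [h2]
      apply mul_le_mul_of_nonneg_left _ (Real.rpow_nonneg ht.le δ)
      calc (u/t) ^ δ ≤ (u/t) ^ (1:ℝ) :=
            Real.rpow_le_rpow_of_exponent_le (by rw [le_div_iff₀ ht]; linarith) hδ1
        _ = u/t := Real.rpow_one _
    have h3 : u ^ δ - t ^ δ ≤ t ^ (δ-1) * (u - t) := by
      have h4 : t ^ δ * (u/t) - t ^ δ = t ^ (δ-1) * (u-t) := by
        rw [Real.rpow_sub ht, Real.rpow_one]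
        field_simp
      linarith [h1, h4.symm.le]
    have h5 : (u - t) ≤ (u-t)^θ * t^(1-θ) := by
      calc u - t = (u-t)^θ * (u-t)^(1-θ) := by
            rw [← Real.rpow_add hut]; norm_num
        _ ≤ (u-t)^θ * t^(1-θ) := by
            apply mul_le_mul_of_nonneg_left _ (Real.rpow_nonneg hut.le θ)
            exact Real.rpow_le_rpow hut.le hutt (by linarith)
    have h6 : t ^ (δ-1) * ((u-t)^θ * t^(1-θ)) = (u-t)^θ * t^(δ-θ) := by
      rw [show t ^ (δ-θ) = t ^ (δ-1) * t^(1-θ) by rw [← Real.rpow_add ht]; ring_nf]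
      ring
    have h7 : u ^ δ - t ^ δ ≤ (u-t)^θ * t^(δ-θ) := by
      calc u ^ δ - t ^ δ ≤ t ^ (δ-1) * (u - t) := h3
        _ ≤ t ^ (δ-1) * ((u-t)^θ * t^(1-θ)) :=
            mul_le_mul_of_nonneg_left h5 (Real.rpow_nonneg ht.le _)
        _ = (u-t)^θ * t^(δ-θ) := h6
    exact mul_le_mul_of_nonneg_right h7 hEt0.le
  -- combine
  have hsplit : u^δ * Eu - t^δ * Et = (u ^ δ - t ^ δ) * Et - u ^ δ * (Et - Eu) := by ring
  -- combine
  have hAnn : 0 ≤ u ^ δ * (Et - Eu) := by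
    apply mul_nonneg (Real.rpow_nonneg hu0.le δ)
    rw [hEuEt]
    nlinarith [Real.exp_le_one_iff.2 (by nlinarith : -(2*R*(u-t)) ≤ 0), hEt0.le]
  have hBnn : 0 ≤ (u ^ δ - t ^ δ) * Et := by
    apply mul_nonneg _ hEt0.le
    have := Real.rpow_le_rpow ht.le htu.le hδ0.le
    linarith
  have hRθ : (1:ℝ) ≤ R ^ θ := Real.one_le_rpow hR hθ0.le
  calc |u^δ * Eu - t^δ * Et| = |(u ^ δ - t ^ δ) * Et - u ^ δ * (Et - Eu)| := by rw [hsplit]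
    _ ≤ |(u ^ δ - t ^ δ) * Et| + |u ^ δ * (Et - Eu)| := abs_sub _ _
    _ = (u ^ δ - t ^ δ) * Et + u ^ δ * (Et - Eu) := by
        rw [abs_of_nonneg hBnn, abs_of_nonneg hAnn]
    _ ≤ (u-t)^θ * t^(δ-θ) * Et + 4 * ((u-t)^θ * t^(δ-θ) * R^θ * Et) := add_le_add hB hA
    _ ≤ 5 * ((u-t)^θ * t^(δ-θ) * R^θ * Et) := by
        nlinarith [mul_nonneg (mul_nonneg (Real.rpow_nonneg hut.le θ)
          (Real.rpow_nonneg ht.le (δ-θ))) hEt0.le]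

lemma znorm_nonneg {d : ℕ} (n : Fin d → ℤ) : 0 ≤ znorm n := Real.sqrt_nonneg _

lemma znorm_sq {d : ℕ} (n : Fin d → ℤ) : znorm n ^ 2 = ∑ i, ((n i : ℝ)) ^ 2 :=
  Real.sq_sqrt (Finset.sum_nonneg fun i _ => sq_nonneg _)

lemma abs_le_znorm {d : ℕ} (n : Fin d → ℤ) (i : Fin d) : |((n i : ℝ))| ≤ znorm n := by
  rw [znorm, ← Real.sqrt_sq_eq_abs]
  exact Real.sqrt_le_sqrt (Finset.single_le_sum (f := fun j => ((n j : ℝ))^2) (fun j _ => sq_nonneg _) (Finset.mem_univ i))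

lemma summable_znorm_subtype {d : ℕ} (hd : 0 < d) {s : ℝ} (hs : (d:ℝ) < s) :
    Summable (fun n : {n : Fin d → ℤ // 0 < n ⟨0, hd⟩} => znorm n.1 ^ (-s)) := by
  have hd0 : (0:ℝ) < d := by exact_mod_cast hd
  set p := s / d with hp'
  have hp : 1 < p := (one_lt_div hd0).mpr hs
  have hs0 : 0 < s := lt_trans hd0 hs
  have hsum : Summable (fun n : {n : Fin d → ℤ // 0 < n ⟨0, hd⟩} =>
      (2:ℝ)^s * ∏ i, ((1:ℝ) + |((n.1 i : ℤ):ℝ)|) ^ (-p)) := by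
    have h1 := ((aux_summable_pi hp d).mul_left ((2:ℝ)^s)).subtype
      {n : Fin d → ℤ | 0 < n ⟨0, hd⟩}
    exact h1.congr fun n => rfl
  apply Summable.of_nonneg_of_le
    (fun n => Real.rpow_nonneg (znorm_nonneg _) _) _ hsum
  rintro ⟨n, hn⟩
  have hn1 : (1:ℝ) ≤ ((n ⟨0, hd⟩ : ℤ):ℝ) := by exact_mod_cast hn
  have hr1 : (1:ℝ) ≤ znorm n := le_trans (hn1.trans (le_abs_self _)) (abs_le_znorm n _)
  have hr0 : (0:ℝ) < znorm n := lt_of_lt_of_le one_pos hr1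
  set P := ∏ i, ((1:ℝ) + |((n i : ℤ):ℝ)|) with hPdef
  have hP1 : (1:ℝ) ≤ P := by
    have h9 : ∏ _i : Fin d, (1:ℝ) ≤ P := by
      apply Finset.prod_le_prod (fun i _ => by norm_num)
      intro i _
      have := abs_nonneg ((n i : ℝ)); linarith
    simpa using h9
  have hP0 : (0:ℝ) < P := lt_of_lt_of_le one_pos hP1
  have hPle : P ≤ (2 * znorm n)^d := by
    have : ∏ _i : Fin d, (2 * znorm n) = (2 * znorm n)^d := by
      rw [Finset.prod_const, Finset.card_fin]
    rw [← this]
    apply Finset.prod_le_prod (fun i _ => by positivity) (fun i _ => ?_)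
    have h2 := abs_le_znorm n i
    linarith
  have hdp : (d:ℝ) * p = s := by rw [hp']; field_simp
  have hPp : P ^ p ≤ 2^s * znorm n ^ s := by
    calc P ^ p ≤ ((2*znorm n)^d) ^ p :=
          Real.rpow_le_rpow hP0.le hPle (by positivity)
      _ = (2*znorm n) ^ ((d:ℝ)*p) := by
          rw [← Real.rpow_natCast (2*znorm n) d, ← Real.rpow_mul (by positivity)]
      _ = (2*znorm n) ^ s := by rw [hdp]
      _ = 2^s * znorm n ^ s := Real.mul_rpow (by norm_num) hr0.le
  have hprod : P ^ (-p) = ∏ i, ((1:ℝ) + |((n i : ℤ):ℝ)|) ^ (-p) :=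
    (Real.finset_prod_rpow _ _ (fun i _ => by positivity) _).symm
  rw [← hprod]
  have hz : (0:ℝ) < znorm n ^ s := Real.rpow_pos_of_pos hr0 s
  have hPp0 : (0:ℝ) < P ^ p := Real.rpow_pos_of_pos hP0 p
  rw [Real.rpow_neg hr0.le, Real.rpow_neg hP0.le]
  have key : (znorm n ^ s)⁻¹ * P ^ p ≤ 2 ^ s := by
    calc (znorm n ^ s)⁻¹ * P ^ p ≤ (znorm n ^ s)⁻¹ * (2^s * znorm n ^ s) :=
          mul_le_mul_of_nonneg_left hPp (by positivity)
      _ = 2^s := by field_simp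
  calc (znorm n ^ s)⁻¹ = ((znorm n ^ s)⁻¹ * P ^ p) * (P^p)⁻¹ := by field_simp
    _ ≤ 2^s * (P^p)⁻¹ := mul_le_mul_of_nonneg_right key (by positivity)

lemma key_term {δ θ a t u r c : ℝ} (d : ℕ)
    (hθ0 : 0 < θ) (hθδ : θ ≤ δ) (hδ1 : δ ≤ 1) (ha : 0 < a)
    (he : 0 ≤ 2*δ - 2*θ - a)
    (ht : 0 < t) (htu : t < u) (hu2t : u ≤ 2*t) (hu1 : u < 1)
    (hr : 1 ≤ r) (hc : c^2 ≤ r^2) :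
    (u^δ * Real.exp (-2*r^2*u) - t^δ * Real.exp (-2*r^2*t))^2 * c^2 * r^((2:ℝ) - 2*d)
      ≤ 25 * (2*a)^a * (u-t)^(2*θ) * r^(-(2*(a + (d:ℝ) - 2 - 2*θ))) := by
  have hr0 : (0:ℝ) < r := lt_of_lt_of_le one_pos hr
  set R := r^2 with hRdef
  have hR1 : (1:ℝ) ≤ R := by nlinarith
  have hR0 : (0:ℝ) < R := lt_of_lt_of_le one_pos hR1
  have hut : 0 < u - t := sub_pos.2 htu
  have ht1 : t ≤ 1 := le_of_lt (htu.trans hu1)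
  have hRpow : ∀ x : ℝ, R^x = r^(2*x) := fun x => by
    rw [hRdef, ← Real.rpow_natCast r 2, ← Real.rpow_mul hr0.le]
    norm_num
  have hinc := key_increment hθ0 hθδ hδ1 ht htu hu2t hu1 hR1
  set Et := Real.exp (-2*R*t) with hEtdef
  set Δ := u^δ * Real.exp (-2*R*u) - t^δ * Et with hΔ
  have hEt0 : 0 < Et := Real.exp_pos _
  have esq : ∀ x y : ℝ, 0 ≤ x → (x^y)^(2:ℕ) = x^(2*y) := fun x y hx => by
    rw [← Real.rpow_natCast (x^y) 2, ← Real.rpow_mul hx]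
    norm_num [mul_comm]
  have hsq : Δ^2 ≤ 25 * ((u-t)^(2*θ) * t^(2*(δ-θ)) * R^(2*θ) * Real.exp (-(4*(R*t)))) := by
    have h2 : Δ^2 ≤ (5 * ((u-t)^θ * t^(δ-θ) * R^θ * Et))^2 := by
      rw [← sq_abs]
      exact pow_le_pow_left₀ (abs_nonneg _) hinc 2
    refine h2.trans_eq ?_
    have eexp : Et^(2:ℕ) = Real.exp (-(4*(R*t))) := by
      rw [sq, ← Real.exp_add]; ring_nf
    rw [mul_pow, mul_pow, mul_pow, mul_pow,
      esq _ _ hut.le, esq _ _ ht.le, esq _ _ hR0.le, eexp]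
    norm_num
  have hexp2 : Real.exp (-(4*(R*t))) ≤ (2*a)^a * (R^(-a) * t^(-a)) := by
    have h1 : Real.exp (-(4*(R*t))) ≤ Real.exp (-(R*t)) := by
      apply Real.exp_le_exp.2; nlinarith
    refine h1.trans ?_
    have h2 := aux_exp_le ha (show (0:ℝ) < R*t by positivity)
    rwa [Real.mul_rpow hR0.le ht.le] at h2
  -- main chain
  have step1 : Δ^2 * c^2 * r^((2:ℝ) - 2*d)
      ≤ (25 * ((u-t)^(2*θ) * t^(2*(δ-θ)) * R^(2*θ) * ((2*a)^a * (R^(-a) * t^(-a))))) * R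
        * r^((2:ℝ) - 2*d) := by
    apply mul_le_mul_of_nonneg_right _ (Real.rpow_nonneg hr0.le _)
    apply mul_le_mul _ hc (sq_nonneg c) (by positivity)
    refine hsq.trans ?_
    apply mul_le_mul_of_nonneg_left _ (by norm_num)
    apply mul_le_mul_of_nonneg_left hexp2 (by positivity)
  refine step1.trans ?_
  -- now pure algebra + t-power ≤ 1
  have htpow : t^(2*(δ-θ)) * t^(-a) = t^(2*δ-2*θ-a) := by
    rw [← Real.rpow_add ht]; ring_nf
  have ht_le1 : t^(2*δ-2*θ-a) ≤ 1 := Real.rpow_le_one ht.le ht1 he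
  have hcomb : r ^ (2*(2*θ)) * r ^ (2 * -a) * r ^ ((2:ℕ):ℝ) * r ^ ((2:ℝ) - 2*(d:ℝ))
      = r ^ (-(2*(a + (d:ℝ) - 2 - 2*θ))) := by
    rw [← Real.rpow_add hr0, ← Real.rpow_add hr0, ← Real.rpow_add hr0]
    congr 1
    push_cast; ring
  have hfin : (25 * ((u-t)^(2*θ) * t^(2*(δ-θ)) * R^(2*θ) * ((2*a)^a * (R^(-a) * t^(-a))))) * R
        * r^((2:ℝ) - 2*d)
      = (25 * (2*a)^a * (u-t)^(2*θ) * r^(-(2*(a + (d:ℝ) - 2 - 2*θ)))) * t^(2*δ-2*θ-a) := by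
    rw [← htpow]
    rw [hRpow (2*θ), hRpow (-a), hRdef, ← Real.rpow_natCast r 2]
    linear_combination (25 * (u-t)^(2*θ) * t^(2*(δ-θ)) * (2*a)^a * t^(-a)) * hcomb
  rw [hfin]
  exact mul_le_of_le_one_right (by positivity) ht_le1

theorem stmt9 (d : ℕ) (hd : 0 < d) (δ : ℝ)
    (hδ1 : max 0 (1 - (d : ℝ) / 4) < δ) (hδ2 : δ ≤ 1) :
    ∃ κ : ℝ, 0 < κ ∧ ∃ C : ℝ, 0 < C ∧
      ∀ t u : ℝ, 0 < t → t < u → u ≤ 2 * t → u < 1 →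
        ∑' n : {n : Fin d → ℤ // 0 < n ⟨0, hd⟩},
            (u ^ δ * Real.exp (-2 * znorm n.1 ^ 2 * u)
              - t ^ δ * Real.exp (-2 * znorm n.1 ^ 2 * t)) ^ 2
            * ((n.1 ⟨0, hd⟩ : ℤ) : ℝ) ^ 2 * znorm n.1 ^ ((2 : ℝ) - 2 * d)
          ≤ C * (u - t) ^ κ := by
  have h0δ : (0:ℝ) < δ := lt_of_le_of_lt (le_max_left _ _) hδ1
  have h1δ : 1 - (d:ℝ)/4 < δ := lt_of_le_of_lt (le_max_right _ _) hδ1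
  set M : ℝ := max 0 (2 - (d:ℝ)/2) with hM
  have hM0 : (0:ℝ) ≤ M := le_max_left _ _
  have hM2 : 2 - (d:ℝ)/2 ≤ M := le_max_right _ _
  have hMδ : M < 2*δ := max_lt (by linarith) (by linarith)
  set G := 2*δ - M with hG
  have hG0 : 0 < G := by simp only [hG]; linarith
  set θ := G/16 with hθ'
  set a := M + G/2 with ha'
  set s := 2*(a + (d:ℝ) - 2 - 2*θ) with hs'
  have hθ0 : 0 < θ := by simp only [hθ']; linarith
  have hθδ : θ ≤ δ := by simp only [hθ', hG]; linarith
  have ha0 : 0 < a := by simp only [ha']; linarith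
  have he : 0 ≤ 2*δ - 2*θ - a := by simp only [hθ', ha', hG]; linarith
  have hds : (d:ℝ) < s := by
    simp only [hs', ha', hθ']
    linarith
  have hTsum := summable_znorm_subtype hd hds
  set T := ∑' n : {n : Fin d → ℤ // 0 < n ⟨0, hd⟩}, znorm n.1 ^ (-s) with hT
  have hT0 : 0 ≤ T := tsum_nonneg fun n => Real.rpow_nonneg (znorm_nonneg _) _
  set Ca := (2*a)^a with hCa
  have hCa0 : 0 < Ca := Real.rpow_pos_of_pos (by linarith) a
  refine ⟨2*θ, by linarith, 25 * Ca * T + 1, by positivity, ?_⟩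
  intro t u ht htu hu2t hu1
  have hut0 : 0 ≤ u - t := by linarith
  have hbound : ∀ n : {n : Fin d → ℤ // 0 < n ⟨0, hd⟩},
      (u ^ δ * Real.exp (-2 * znorm n.1 ^ 2 * u)
        - t ^ δ * Real.exp (-2 * znorm n.1 ^ 2 * t)) ^ 2
        * ((n.1 ⟨0, hd⟩ : ℤ) : ℝ) ^ 2 * znorm n.1 ^ ((2 : ℝ) - 2 * d)
      ≤ (25 * Ca * (u-t)^(2*θ)) * znorm n.1 ^ (-s) := by
    intro n
    have hn1 : (1:ℝ) ≤ ((n.1 ⟨0, hd⟩ : ℤ):ℝ) := by exact_mod_cast n.2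
    have hr1 : (1:ℝ) ≤ znorm n.1 :=
      le_trans (hn1.trans (le_abs_self _)) (abs_le_znorm n.1 _)
    have hc : ((n.1 ⟨0, hd⟩ : ℤ):ℝ)^2 ≤ znorm n.1 ^2 := by
      rw [znorm_sq]
      exact Finset.single_le_sum (f := fun i => ((n.1 i : ℝ))^2)
        (fun i _ => sq_nonneg _) (Finset.mem_univ _)
    have hk := key_term (δ:=δ) (θ:=θ) (a:=a) d hθ0 hθδ hδ2 ha0 he ht htu hu2t hu1 hr1 hc
    calc (u ^ δ * Real.exp (-2 * znorm n.1 ^ 2 * u)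
        - t ^ δ * Real.exp (-2 * znorm n.1 ^ 2 * t)) ^ 2
        * ((n.1 ⟨0, hd⟩ : ℤ) : ℝ) ^ 2 * znorm n.1 ^ ((2 : ℝ) - 2 * d)
        ≤ 25 * (2*a)^a * (u-t)^(2*θ) * znorm n.1 ^(-(2*(a + (d:ℝ) - 2 - 2*θ))) := hk
      _ = (25 * Ca * (u-t)^(2*θ)) * znorm n.1 ^ (-s) := by
          rw [hCa, hs']
  have hsumB : Summable (fun n : {n : Fin d → ℤ // 0 < n ⟨0, hd⟩} =>
      (25 * Ca * (u-t)^(2*θ)) * znorm n.1 ^ (-s)) := hTsum.mul_left _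
  have hsumL : Summable (fun n : {n : Fin d → ℤ // 0 < n ⟨0, hd⟩} =>
      (u ^ δ * Real.exp (-2 * znorm n.1 ^ 2 * u)
        - t ^ δ * Real.exp (-2 * znorm n.1 ^ 2 * t)) ^ 2
        * ((n.1 ⟨0, hd⟩ : ℤ) : ℝ) ^ 2 * znorm n.1 ^ ((2 : ℝ) - 2 * d)) := by
    apply Summable.of_nonneg_of_le _ hbound hsumB
    intro n
    exact mul_nonneg (mul_nonneg (sq_nonneg _) (sq_nonneg _))
      (Real.rpow_nonneg (znorm_nonneg _) _)
  calc ∑' n : {n : Fin d → ℤ // 0 < n ⟨0, hd⟩},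
            (u ^ δ * Real.exp (-2 * znorm n.1 ^ 2 * u)
              - t ^ δ * Real.exp (-2 * znorm n.1 ^ 2 * t)) ^ 2
            * ((n.1 ⟨0, hd⟩ : ℤ) : ℝ) ^ 2 * znorm n.1 ^ ((2 : ℝ) - 2 * d)
      ≤ ∑' n : {n : Fin d → ℤ // 0 < n ⟨0, hd⟩},
          (25 * Ca * (u-t)^(2*θ)) * znorm n.1 ^ (-s) :=
        Summable.tsum_le_tsum hbound hsumL hsumB
    _ = (25 * Ca * (u-t)^(2*θ)) * T := by rw [tsum_mul_left]
    _ ≤ (25 * Ca * T + 1) * (u - t) ^ (2*θ) := by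
        have h9 : (0:ℝ) ≤ (u-t)^(2*θ) := Real.rpow_nonneg hut0 _
        nlinarith
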